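/- Assume in addition 4/3 ≤ γ < 2. Let φ(t,x) := t^{2/γ−1} ψ(t,x) be the renormalized solution. Then for every multi-index α ∈ ℕ³ and every t ∈ (0, t₀], the renormalized energy F_α(t) := (1/2) ∫_{[0,1]³} [ t^{4−4/γ} (∂_t∂_x^α φ)²(t,x) + t^{4−4/γ−4/(3γ)} Σ_{i=1}^{3} (∂_{x_i}∂_x^α φ)²(t,x) ] dx satisfies F_α(t) ≤ F_α(t₀). -/

import Mathlib

noncomputable section

open MeasureTheory Filter Set

/-- Spatial partial derivative `∂_{x_i}` in the `i`-th coordinate direction. -/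
def pd (i : Fin 3) (f : (Fin 3 → ℝ) → ℝ) (x : Fin 3 → ℝ) : ℝ :=
  deriv (fun s => f (Function.update x i s)) (x i)

/-- Iterated spatial derivative `∂_x^α` for a multi-index `α ∈ ℕ³`. -/
def pdMulti (α : Fin 3 → ℕ) (f : (Fin 3 → ℝ) → ℝ) : (Fin 3 → ℝ) → ℝ :=
  (pd 0)^[α 0] ((pd 1)^[α 1] ((pd 2)^[α 2] f))

/-- Time derivative `∂_t`. -/
def dtd (ψ : ℝ → (Fin 3 → ℝ) → ℝ) : ℝ → (Fin 3 → ℝ) → ℝ :=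
  fun t x => deriv (fun s => ψ s x) t

/-- `ℤ³`-periodicity of a function on `ℝ³`. -/
def ZPeriodic (f : (Fin 3 → ℝ) → ℝ) : Prop :=
  ∀ (x : Fin 3 → ℝ) (k : Fin 3 → ℤ), f (x + fun i => (k i : ℝ)) = f x

/-- Smoothness of `ψ` on `(0,∞) × ℝ³`. -/
def SmoothOnPos (ψ : ℝ → (Fin 3 → ℝ) → ℝ) : Prop :=
  ContDiffOn ℝ (⊤ : ℕ∞) (fun p : ℝ × (Fin 3 → ℝ) => ψ p.1 p.2)
    {p : ℝ × (Fin 3 → ℝ) | 0 < p.1}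

/-- The unit cube `[0,1]³`, a fundamental domain for `𝕋³`. -/
def cube : Set (Fin 3 → ℝ) := Set.Icc 0 1

/-- The FLRW wave equation `□_g ψ = 0` in coordinates. -/
def FLRWwave (γ : ℝ) (ψ : ℝ → (Fin 3 → ℝ) → ℝ) : Prop :=
  ∀ t : ℝ, 0 < t → ∀ x : Fin 3 → ℝ,
    dtd (dtd ψ) t x + (2 / γ) * t⁻¹ * dtd ψ t x
      - t ^ (-(4 / (3 * γ))) * ∑ i : Fin 3, pd i (pd i (ψ t)) x = 0

/-- The renormalized energy `F_α(t)` of `φ = t^{2/γ−1}ψ` (stiffest region `4/3 ≤ γ < 2`). -/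
def Fren (γ : ℝ) (φ : ℝ → (Fin 3 → ℝ) → ℝ) (α : Fin 3 → ℕ) (t : ℝ) : ℝ :=
  (1 / 2) * ∫ x in cube,
    (t ^ (4 - 4 / γ) * (dtd (fun s => pdMulti α (φ s)) t x) ^ 2
      + t ^ (4 - 4 / γ - 4 / (3 * γ)) * ∑ i : Fin 3, (pd i (pdMulti α (φ t)) x) ^ 2)

open scoped ContDiff

abbrev Vsp := ℝ × (Fin 3 → ℝ)
def Upos : Set Vsp := {p | 0 < p.1}
lemma isOpen_Upos : IsOpen Upos := isOpen_lt continuous_const continuous_fst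

lemma one_le_inf : (1 : WithTop ℕ∞) ≤ ∞ := by exact_mod_cast le_top
lemma two_le_inf : (2 : WithTop ℕ∞) ≤ ∞ := by
  have : ((2 : ℕ∞) : WithTop ℕ∞) ≤ ((⊤ : ℕ∞) : WithTop ℕ∞) := WithTop.coe_le_coe.2 le_top
  simpa using this
lemma inf_add_one_le : ∞ + 1 ≤ ∞ := le_of_eq rfl
def DD (v : Vsp) (F : Vsp → ℝ) : Vsp → ℝ := fun p => fderiv ℝ F p v
abbrev Dt : (Vsp → ℝ) → Vsp → ℝ := DD (1, 0)
abbrev Dx (i : Fin 3) : (Vsp → ℝ) → Vsp → ℝ := DD (0, Pi.single i 1)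

section slices
variable {F G H : Vsp → ℝ} {t : ℝ} {x : Fin 3 → ℝ} {p : Vsp}

lemma hasDerivAt_slice_t (h : DifferentiableAt ℝ F (t, x)) :
    HasDerivAt (fun s => F (s, x)) (Dt F (t, x)) t := by
  have hL : HasDerivAt (fun s : ℝ => (s, x)) ((1 : ℝ), (0 : Fin 3 → ℝ)) t :=
    (hasDerivAt_id t).prodMk (hasDerivAt_const t x)
  exact h.hasFDerivAt.comp_hasDerivAt t hL

lemma hasDerivAt_slice_x (h : DifferentiableAt ℝ F (t, x)) (i : Fin 3) :
    HasDerivAt (fun s => F (t, Function.update x i s)) (Dx i F (t, x)) (x i) := by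
  have hL : HasDerivAt (fun s : ℝ => ((t : ℝ), Function.update x i s))
      ((0 : ℝ), Pi.single i (1 : ℝ)) (x i) :=
    (hasDerivAt_const (x i) t).prodMk (hasDerivAt_update x i (x i))
  have h' : HasFDerivAt F (fderiv ℝ F (t, x)) (t, Function.update x i (x i)) := by
    rw [Function.update_eq_self]; exact h.hasFDerivAt
  exact h'.comp_hasDerivAt _ hL

lemma pd_slice (h : DifferentiableAt ℝ F (t, x)) (i : Fin 3) :
    pd i (fun y => F (t, y)) x = Dx i F (t, x) := (hasDerivAt_slice_x h i).deriv

lemma deriv_slice (h : DifferentiableAt ℝ F (t, x)) :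
    deriv (fun s => F (s, x)) t = Dt F (t, x) := (hasDerivAt_slice_t h).deriv

lemma DD_congr (hFG : ∀ q ∈ Upos, F q = G q) (hp : p ∈ Upos) (v : Vsp) :
    DD v F p = DD v G p := by
  have : F =ᶠ[nhds p] G := eventuallyEq_of_mem (isOpen_Upos.mem_nhds hp) hFG
  simp only [DD, this.fderiv_eq]

lemma DD_mul (hG : DifferentiableAt ℝ G p) (hH : DifferentiableAt ℝ H p) (v : Vsp) :
    DD v (fun q => G q * H q) p = DD v G p * H p + G p * DD v H p := by
  have := fderiv_fun_mul hG hH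
  simp only [DD]
  rw [this]
  simp [mul_comm, add_comm]

lemma DD_add (hG : DifferentiableAt ℝ G p) (hH : DifferentiableAt ℝ H p) (v : Vsp) :
    DD v (fun q => G q + H q) p = DD v G p + DD v H p := by
  simp only [DD]; rw [fderiv_fun_add hG hH]; simp

lemma DD_sub (hG : DifferentiableAt ℝ G p) (hH : DifferentiableAt ℝ H p) (v : Vsp) :
    DD v (fun q => G q - H q) p = DD v G p - DD v H p := by
  simp only [DD]; rw [fderiv_fun_sub hG hH]; simp

lemma DD_const_mul (hG : DifferentiableAt ℝ G p) (c : ℝ) (v : Vsp) :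
    DD v (fun q => c * G q) p = c * DD v G p := by
  simp only [DD]; rw [fderiv_const_mul hG c]; simp

lemma DD_sum {ι : Type*} (s : Finset ι) {f : ι → Vsp → ℝ}
    (hf : ∀ i ∈ s, DifferentiableAt ℝ (f i) p) (v : Vsp) :
    DD v (fun q => ∑ i ∈ s, f i q) p = ∑ i ∈ s, DD v (f i) p := by
  simp only [DD]; rw [fderiv_fun_sum hf]; simp

lemma hasFDerivAt_tpow (r : ℝ) (hp : p ∈ Upos) :
    HasFDerivAt (fun q : Vsp => q.1 ^ r)
      ((r * p.1 ^ (r - 1)) • ContinuousLinearMap.fst ℝ ℝ (Fin 3 → ℝ)) p := by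
  have h1 : HasDerivAt (fun s : ℝ => s ^ r) (r * p.1 ^ (r - 1)) p.1 :=
    Real.hasDerivAt_rpow_const (Or.inl (ne_of_gt hp))
  exact h1.comp_hasFDerivAt p hasFDerivAt_fst

lemma diffAt_tpow (r : ℝ) (hp : p ∈ Upos) :
    DifferentiableAt ℝ (fun q : Vsp => q.1 ^ r) p := (hasFDerivAt_tpow r hp).differentiableAt

lemma DD_tpow (r : ℝ) (hp : p ∈ Upos) (v : Vsp) :
    DD v (fun q : Vsp => q.1 ^ r) p = v.1 * (r * p.1 ^ (r - 1)) := by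
  simp only [DD, (hasFDerivAt_tpow r hp).fderiv]
  simp [mul_comm]

lemma contDiffOn_tpow (r : ℝ) : ContDiffOn ℝ ∞ (fun q : Vsp => q.1 ^ r) Upos := by
  intro p hp
  exact (((Real.contDiffAt_rpow_const_of_ne (p := r) (ne_of_gt hp)).comp p
    contDiff_fst.contDiffAt)).contDiffWithinAt

end slices


section per
variable {F G H : Vsp → ℝ} {t : ℝ} {x : Fin 3 → ℝ} {p : Vsp}

lemma ContDiffOn.dd' {F : Vsp → ℝ} (hF : ContDiffOn ℝ ∞ F Upos) (v : Vsp) :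
    ContDiffOn ℝ ∞ (DD v F) Upos :=
  (hF.fderiv_of_isOpen isOpen_Upos inf_add_one_le).clm_apply contDiffOn_const

lemma ContDiffOn.diffAt' {F : Vsp → ℝ} (hF : ContDiffOn ℝ ∞ F Upos)
    (hp : p ∈ Upos) : DifferentiableAt ℝ F p :=
  (hF.contDiffAt (isOpen_Upos.mem_nhds hp)).differentiableAt (by simp)

/-- `ℤ³`-periodicity in the space variable, on the region `Upos`. -/
def PerU (F : Vsp → ℝ) : Prop :=
  ∀ p ∈ Upos, ∀ k : Fin 3 → ℤ, F (p.1, p.2 + fun i => (k i : ℝ)) = F p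

lemma PerU.dd (hF : ContDiffOn ℝ ∞ F Upos) (hP : PerU F) (v : Vsp) : PerU (DD v F) := by
  intro p hp k
  set c : Vsp := (0, fun i => (k i : ℝ)) with hc
  have hTq : ∀ q : Vsp, q + c = (q.1, q.2 + fun i => (k i : ℝ)) := by
    intro q; ext <;> simp [hc]
  have hTp_mem : p + c ∈ Upos := by
    simpa [Upos, hTq p] using hp
  have h2 : fderiv ℝ (fun q => F (q + c)) p = fderiv ℝ F (p + c) := by
    have hdF : DifferentiableAt ℝ F (p + c) := hF.diffAt' hTp_mem
    have hT : DifferentiableAt ℝ (fun q : Vsp => q + c) p :=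
      (differentiable_id.add_const c) p
    have := fderiv_comp (𝕜 := ℝ) p hdF hT
    have hTf : fderiv ℝ (fun q : Vsp => q + c) p = ContinuousLinearMap.id ℝ Vsp := by
      rw [fderiv_add_const]; exact fderiv_id
    rw [Function.comp_def] at this
    rw [this, hTf, ContinuousLinearMap.comp_id]
  have h1 : fderiv ℝ (fun q => F (q + c)) p = fderiv ℝ F p := by
    apply Filter.EventuallyEq.fderiv_eq
    filter_upwards [isOpen_Upos.mem_nhds hp] with q hq
    rw [hTq q]; exact hP q hq k
  show DD v F (p.1, p.2 + fun i => (k i : ℝ)) = DD v F p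
  rw [← hTq p]
  simp only [DD, h2.symm, h1]

lemma PerU.mul (hG : PerU G) (hH : PerU H) : PerU (fun q => G q * H q) := by
  intro p hp k; simp only []; rw [hG p hp k, hH p hp k]

lemma contDiffOn_dxIter (hF : ContDiffOn ℝ ∞ F Upos) (i : Fin 3) (n : ℕ) :
    ContDiffOn ℝ ∞ ((Dx i)^[n] F) Upos := by
  induction n with
  | zero => exact hF
  | succ n ih => rw [Function.iterate_succ_apply']; exact ih.dd' _

lemma perU_dxIter (hF : ContDiffOn ℝ ∞ F Upos) (hP : PerU F) (i : Fin 3) (n : ℕ) :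
    PerU ((Dx i)^[n] F) := by
  induction n with
  | zero => exact hP
  | succ n ih =>
    rw [Function.iterate_succ_apply']
    exact ih.dd (contDiffOn_dxIter hF i n) _

/-- The joint-variable version of `pdMulti`. -/
def Ax (α : Fin 3 → ℕ) (F : Vsp → ℝ) : Vsp → ℝ :=
  (Dx 0)^[α 0] ((Dx 1)^[α 1] ((Dx 2)^[α 2] F))

lemma contDiffOn_Ax (hF : ContDiffOn ℝ ∞ F Upos) (α : Fin 3 → ℕ) :
    ContDiffOn ℝ ∞ (Ax α F) Upos :=
  contDiffOn_dxIter (contDiffOn_dxIter (contDiffOn_dxIter hF 2 (α 2)) 1 (α 1)) 0 (α 0)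

lemma perU_Ax (hF : ContDiffOn ℝ ∞ F Upos) (hP : PerU F) (α : Fin 3 → ℕ) :
    PerU (Ax α F) :=
  perU_dxIter (contDiffOn_dxIter (contDiffOn_dxIter hF 2 (α 2)) 1 (α 1))
    (perU_dxIter (contDiffOn_dxIter hF 2 (α 2))
      (perU_dxIter hF hP 2 (α 2)) 1 (α 1)) 0 (α 0)

lemma pdIter_slice (hF : ContDiffOn ℝ ∞ F Upos) (i : Fin 3) (n : ℕ) (ht : 0 < t) :
    (pd i)^[n] (fun y => F (t, y)) = fun y => (Dx i)^[n] F (t, y) := by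
  induction n with
  | zero => rfl
  | succ n ih =>
    rw [Function.iterate_succ_apply', Function.iterate_succ_apply', ih]
    funext y
    exact pd_slice ((contDiffOn_dxIter hF i n).diffAt' (by exact ht)) i

lemma pdMulti_slice (hF : ContDiffOn ℝ ∞ F Upos) (α : Fin 3 → ℕ) (ht : 0 < t) :
    pdMulti α (fun y => F (t, y)) = fun y => Ax α F (t, y) := by
  unfold pdMulti Ax
  rw [pdIter_slice hF 2 (α 2) ht, pdIter_slice (contDiffOn_dxIter hF 2 (α 2)) 1 (α 1) ht,
    pdIter_slice (contDiffOn_dxIter (contDiffOn_dxIter hF 2 (α 2)) 1 (α 1)) 0 (α 0) ht]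

end per

section wave
variable {F : Vsp → ℝ} {p : Vsp} {b c : ℝ}

/-- The renormalized wave equation on `Upos`. -/
def WaveU (b c : ℝ) (F : Vsp → ℝ) : Prop :=
  ∀ p ∈ Upos, Dt (Dt F) p + b * p.1⁻¹ * Dt F p
    - p.1 ^ (-c) * ∑ i : Fin 3, Dx i (Dx i F) p = 0

lemma DD_tfun {g : ℝ → ℝ} (h : DifferentiableAt ℝ g p.1) (v : Vsp) :
    DD v (fun q : Vsp => g q.1) p = v.1 * deriv g p.1 := by
  have : HasFDerivAt (fun q : Vsp => g q.1)
      ((deriv g p.1) • ContinuousLinearMap.fst ℝ ℝ (Fin 3 → ℝ)) p :=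
    h.hasDerivAt.comp_hasFDerivAt p hasFDerivAt_fst
  simp only [DD, this.fderiv]
  simp [mul_comm]

lemma diffAt_tfun {g : ℝ → ℝ} (h : DifferentiableAt ℝ g p.1) :
    DifferentiableAt ℝ (fun q : Vsp => g q.1) p :=
  h.comp p differentiableAt_fst

lemma dd_symm {F : Vsp → ℝ} (hF : ContDiffOn ℝ ∞ F Upos) {p : Vsp} (hp : p ∈ Upos)
    (v w : Vsp) : DD v (DD w F) p = DD w (DD v F) p := by
  have hd : DifferentiableAt ℝ (fderiv ℝ F) p :=
    ((hF.fderiv_of_isOpen isOpen_Upos inf_add_one_le).contDiffAt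
      (isOpen_Upos.mem_nhds hp)).differentiableAt (by simp)
  have hsymm : IsSymmSndFDerivAt ℝ F p :=
    (hF.contDiffAt (isOpen_Upos.mem_nhds hp)).isSymmSndFDerivAt (by simpa [minSmoothness_of_isRCLikeNormedField] using two_le_inf)
  have key : ∀ u z : Vsp, DD u (DD z F) p = fderiv ℝ (fderiv ℝ F) p u z := by
    intro u z
    have : DD z F = fun q => (fderiv ℝ F q) z := rfl
    rw [DD, this, fderiv_clm_apply hd (differentiableAt_const z)]
    simp
  rw [key, key, hsymm.eq]

lemma WaveU.dx (hF : ContDiffOn ℝ ∞ F Upos) (hW : WaveU b c F) (j : Fin 3) :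
    WaveU b c (Dx j F) := by
  intro p hp
  have hpne : p.1 ≠ 0 := ne_of_gt hp
  -- differentiability of the pieces
  have hDtF := hF.dd' (1, 0)
  have hDtDtF := hDtF.dd' (1, 0)
  have hDx2 : ∀ i : Fin 3, ContDiffOn ℝ ∞ (fun q => Dx i (Dx i F) q) Upos :=
    fun i => (hF.dd' _).dd' _
  have hg1 : DifferentiableAt ℝ (fun q : Vsp => b * q.1⁻¹) p :=
    diffAt_tfun (by exact (differentiableAt_inv hpne).const_mul b)
  have hg2 : DifferentiableAt ℝ (fun q : Vsp => q.1 ^ (-c)) p := diffAt_tpow _ hp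
  have hsum : DifferentiableAt ℝ (fun q => ∑ i : Fin 3, Dx i (Dx i F) q) p := by
    apply DifferentiableAt.fun_sum
    intro i _
    exact (hDx2 i).diffAt' hp
  have hE2 : DifferentiableAt ℝ (fun q => b * q.1⁻¹ * Dt F q) p :=
    hg1.mul (hDtF.diffAt' hp)
  have hE3 : DifferentiableAt ℝ (fun q => q.1 ^ (-c) * ∑ i : Fin 3, Dx i (Dx i F) q) p :=
    hg2.mul hsum
  -- the equation function vanishes on Upos, so its derivative vanishes
  have hzero : DD (0, Pi.single j 1)
      (fun q => Dt (Dt F) q + b * q.1⁻¹ * Dt F q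
        - q.1 ^ (-c) * ∑ i : Fin 3, Dx i (Dx i F) q) p = 0 := by
    rw [DD_congr (G := fun _ => (0 : ℝ)) (fun q hq => hW q hq) hp]
    simp [DD]
  rw [DD_sub ((hDtDtF.diffAt' hp).fun_add hE2) hE3,
    DD_add (hDtDtF.diffAt' hp) hE2,
    DD_mul hg1 (hDtF.diffAt' hp),
    DD_mul hg2 hsum] at hzero
  have hcoef1 : DD (0, Pi.single j 1) (fun q : Vsp => b * q.1⁻¹) p = 0 := by
    have h := DD_tfun (g := fun s : ℝ => b * s⁻¹) (p := p)
      (by exact (differentiableAt_inv hpne).const_mul b) (0, Pi.single j 1)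
    simpa using h
  have hcoef2 : DD (0, Pi.single j 1) (fun q : Vsp => q.1 ^ (-c)) p = 0 := by
    rw [DD_tpow _ hp]; simp
  rw [hcoef1, hcoef2, DD_sum Finset.univ (fun i _ => (hDx2 i).diffAt' hp)] at hzero
  -- now commute derivatives
  have key1 : DD (0, Pi.single j 1) (Dt (Dt F)) p = Dt (Dt (Dx j F)) p := by
    rw [dd_symm hDtF hp]
    exact DD_congr (fun q hq => dd_symm hF hq _ _) hp _
  have key2 : DD (0, Pi.single j 1) (Dt F) p = Dt (Dx j F) p := dd_symm hF hp _ _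
  have key3 : ∀ i : Fin 3, DD (0, Pi.single j 1) (Dx i (Dx i F)) p
      = Dx i (Dx i (Dx j F)) p := by
    intro i
    rw [dd_symm (hF.dd' _) hp]
    exact DD_congr (fun q hq => dd_symm hF hq _ _) hp _
  rw [key1, key2] at hzero
  simp only [key3] at hzero
  simpa using hzero

lemma WaveU.dxIter (hF : ContDiffOn ℝ ∞ F Upos) (hW : WaveU b c F) (i : Fin 3) (n : ℕ) :
    WaveU b c ((Dx i)^[n] F) := by
  induction n with
  | zero => exact hW
  | succ n ih =>
    rw [Function.iterate_succ_apply']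
    exact ih.dx (contDiffOn_dxIter hF i n) i

lemma WaveU.ax (hF : ContDiffOn ℝ ∞ F Upos) (hW : WaveU b c F) (α : Fin 3 → ℕ) :
    WaveU b c (Ax α F) :=
  ((hW.dxIter hF 2 (α 2)).dxIter (contDiffOn_dxIter hF 2 (α 2)) 1 (α 1)).dxIter
    (contDiffOn_dxIter (contDiffOn_dxIter hF 2 (α 2)) 1 (α 1)) 0 (α 0)

end wave

section renorm
variable {Ψ : Vsp → ℝ}

lemma waveU_renorm (γ : ℝ) (hγ : 0 < γ) (hΨ : ContDiffOn ℝ ∞ Ψ Upos)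
    (hw : ∀ p ∈ Upos, Dt (Dt Ψ) p + (2 / γ) * p.1⁻¹ * Dt Ψ p
      - p.1 ^ (-(4 / (3 * γ))) * ∑ i : Fin 3, Dx i (Dx i Ψ) p = 0) :
    WaveU (2 - 2 / γ) (4 / (3 * γ)) (fun p => p.1 ^ (2 / γ - 1) * Ψ p) := by
  set a : ℝ := 2 / γ with ha
  set c : ℝ := 4 / (3 * γ) with hc
  set F : Vsp → ℝ := fun p => p.1 ^ (a - 1) * Ψ p with hF
  intro p hp
  have hpt : (0 : ℝ) < p.1 := hp
  have hpne : p.1 ≠ 0 := ne_of_gt hpt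
  have hdΨ : ∀ q ∈ Upos, DifferentiableAt ℝ Ψ q := fun q hq => hΨ.diffAt' hq
  have hdDtΨ : ∀ q ∈ Upos, DifferentiableAt ℝ (Dt Ψ) q :=
    fun q hq => (hΨ.dd' _).diffAt' hq
  have hDtF : ∀ q ∈ Upos, Dt F q
      = (a - 1) * q.1 ^ (a - 2) * Ψ q + q.1 ^ (a - 1) * Dt Ψ q := by
    intro q hq
    have h : Dt F q = Dt (fun q : Vsp => q.1 ^ (a - 1)) q * Ψ q
        + q.1 ^ (a - 1) * Dt Ψ q := DD_mul (diffAt_tpow _ hq) (hdΨ q hq) _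
    have h5 : Dt (fun q : Vsp => q.1 ^ (a - 1)) q = 1 * ((a - 1) * q.1 ^ (a - 1 - 1)) :=
      DD_tpow _ hq _
    rw [h, h5, show a - 1 - 1 = a - 2 from by ring]; ring
  have hDxF : ∀ i : Fin 3, ∀ q ∈ Upos, Dx i F q = q.1 ^ (a - 1) * Dx i Ψ q := by
    intro i q hq
    have h : Dx i F q = Dx i (fun q : Vsp => q.1 ^ (a - 1)) q * Ψ q
        + q.1 ^ (a - 1) * Dx i Ψ q := DD_mul (diffAt_tpow _ hq) (hdΨ q hq) _
    have h5 : Dx i (fun q : Vsp => q.1 ^ (a - 1)) q = 0 * ((a - 1) * q.1 ^ (a - 1 - 1)) :=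
      DD_tpow _ hq _
    rw [h, h5]; ring
  have hDtDtF : Dt (Dt F) p
      = (a - 1) * (a - 2) * p.1 ^ (a - 2 - 1) * Ψ p
        + 2 * ((a - 1) * p.1 ^ (a - 2)) * Dt Ψ p + p.1 ^ (a - 1) * Dt (Dt Ψ) p := by
    have hcg : Dt (Dt F) p
        = Dt (fun q => (a - 1) * q.1 ^ (a - 2) * Ψ q + q.1 ^ (a - 1) * Dt Ψ q) p :=
      DD_congr hDtF hp _
    have d1 : DifferentiableAt ℝ (fun q : Vsp => (a - 1) * q.1 ^ (a - 2)) p :=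
      (diffAt_tpow _ hp).const_mul _
    have d2 : DifferentiableAt ℝ (fun q : Vsp => (a - 1) * q.1 ^ (a - 2) * Ψ q) p :=
      d1.mul (hdΨ p hp)
    have d3 : DifferentiableAt ℝ (fun q : Vsp => q.1 ^ (a - 1) * Dt Ψ q) p :=
      (diffAt_tpow _ hp).mul (hdDtΨ p hp)
    have h1 : Dt (fun q => (a - 1) * q.1 ^ (a - 2) * Ψ q + q.1 ^ (a - 1) * Dt Ψ q) p
        = Dt (fun q : Vsp => (a - 1) * q.1 ^ (a - 2) * Ψ q) p
          + Dt (fun q : Vsp => q.1 ^ (a - 1) * Dt Ψ q) p := DD_add d2 d3 _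
    have h2 : Dt (fun q : Vsp => (a - 1) * q.1 ^ (a - 2) * Ψ q) p
        = Dt (fun q : Vsp => (a - 1) * q.1 ^ (a - 2)) p * Ψ p
          + (a - 1) * p.1 ^ (a - 2) * Dt Ψ p := DD_mul d1 (hdΨ p hp) _
    have h3 : Dt (fun q : Vsp => q.1 ^ (a - 1) * Dt Ψ q) p
        = Dt (fun q : Vsp => q.1 ^ (a - 1)) p * Dt Ψ p
          + p.1 ^ (a - 1) * Dt (Dt Ψ) p := DD_mul (diffAt_tpow _ hp) (hdDtΨ p hp) _
    have h4 : Dt (fun q : Vsp => (a - 1) * q.1 ^ (a - 2)) p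
        = (a - 1) * Dt (fun q : Vsp => q.1 ^ (a - 2)) p :=
      DD_const_mul (diffAt_tpow _ hp) _ _
    have h5 : Dt (fun q : Vsp => q.1 ^ (a - 2)) p = 1 * ((a - 2) * p.1 ^ (a - 2 - 1)) :=
      DD_tpow _ hp _
    have h6 : Dt (fun q : Vsp => q.1 ^ (a - 1)) p = 1 * ((a - 1) * p.1 ^ (a - 1 - 1)) :=
      DD_tpow _ hp _
    rw [hcg, h1, h2, h3, h4, h5, h6, show a - 1 - 1 = a - 2 from by ring]; ring
  have hDxDxF : ∀ i : Fin 3, Dx i (Dx i F) p = p.1 ^ (a - 1) * Dx i (Dx i Ψ) p := by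
    intro i
    have hcg : Dx i (Dx i F) p = Dx i (fun q => q.1 ^ (a - 1) * Dx i Ψ q) p :=
      DD_congr (fun q hq => hDxF i q hq) hp _
    have hdDxΨ : DifferentiableAt ℝ (Dx i Ψ) p := (hΨ.dd' _).diffAt' hp
    have h1 : Dx i (fun q : Vsp => q.1 ^ (a - 1) * Dx i Ψ q) p
        = Dx i (fun q : Vsp => q.1 ^ (a - 1)) p * Dx i Ψ p
          + p.1 ^ (a - 1) * Dx i (Dx i Ψ) p := DD_mul (diffAt_tpow _ hp) hdDxΨ _
    have h5 : Dx i (fun q : Vsp => q.1 ^ (a - 1)) p = 0 * ((a - 1) * p.1 ^ (a - 1 - 1)) :=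
      DD_tpow _ hp _
    rw [hcg, h1, h5]; ring
  have hsum : ∑ i : Fin 3, Dx i (Dx i F) p
      = p.1 ^ (a - 1) * ∑ i : Fin 3, Dx i (Dx i Ψ) p := by
    rw [Finset.mul_sum]; exact Finset.sum_congr rfl fun i _ => hDxDxF i
  have e1 : p.1 ^ (a - 2) = p.1 ^ (a - 1) / p.1 := by
    rw [show a - 2 = a - 1 - 1 from by ring, Real.rpow_sub hpt, Real.rpow_one]
  have e2 : p.1 ^ (a - 2 - 1) = p.1 ^ (a - 1) / p.1 / p.1 := by
    rw [Real.rpow_sub hpt (a - 2) 1, Real.rpow_one, e1]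
  have hweq := hw p hp
  show Dt (Dt F) p + (2 - a) * p.1⁻¹ * Dt F p - p.1 ^ (-c) * ∑ i : Fin 3, Dx i (Dx i F) p = 0
  rw [hDtDtF, hDtF p hp, hsum, e1, e2]
  have hTT : Dt (Dt Ψ) p
      = -(a * p.1⁻¹ * Dt Ψ p) + p.1 ^ (-c) * ∑ i : Fin 3, Dx i (Dx i Ψ) p := by
    rw [ha]; linarith [hweq]
  rw [hTT]
  field_simp
  ring

end renorm


section divergence
variable {H G : Vsp → ℝ} {s : ℝ}

lemma slice_cont (hH : ContDiffOn ℝ ∞ H Upos) (hs : 0 < s) :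
    Continuous (fun y => H (s, y)) := by
  rw [← continuousOn_univ]
  exact hH.continuousOn.comp (Continuous.continuousOn (by continuity)) (fun y _ => hs)

lemma slice_contDiff0 (hH : ContDiffOn ℝ ∞ H Upos) (hs : 0 < s) :
    ContDiff ℝ ∞ (fun y => H (s, y)) := by
  rw [← contDiffOn_univ]
  exact hH.comp ((contDiff_const.prodMk contDiff_id).contDiffOn) (fun y _ => hs)

lemma hasFDerivAt_slice_space (hd : DifferentiableAt ℝ H (s, x)) :
    HasFDerivAt (fun y => H (s, y))
      ((fderiv ℝ H (s, x)).comp (ContinuousLinearMap.inr ℝ ℝ (Fin 3 → ℝ))) x := by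
  have hline : HasFDerivAt (fun y : Fin 3 → ℝ => ((s : ℝ), y))
      (ContinuousLinearMap.inr ℝ ℝ (Fin 3 → ℝ)) x := by
    have h1 : HasFDerivAt (fun y : Fin 3 → ℝ => ((s : ℝ), y))
        (((0 : (Fin 3 → ℝ) →L[ℝ] ℝ)).prod (ContinuousLinearMap.id ℝ (Fin 3 → ℝ))) x :=
      (hasFDerivAt_const (𝕜 := ℝ) s x).prodMk (hasFDerivAt_id (𝕜 := ℝ) x)
    have h2 : ContinuousLinearMap.inr ℝ ℝ (Fin 3 → ℝ)
        = ((0 : (Fin 3 → ℝ) →L[ℝ] ℝ)).prod (ContinuousLinearMap.id ℝ (Fin 3 → ℝ)) := by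
      ext y <;> rfl
    rw [h2]; exact h1
  exact hd.hasFDerivAt.comp x hline

lemma insertNth_one_eq (i : Fin 3) (y : Fin 2 → ℝ) :
    i.insertNth (1 : ℝ) y
      = i.insertNth (0 : ℝ) y + fun j => (((Pi.single i 1 : Fin 3 → ℤ) j : ℝ)) := by
  funext j
  refine Fin.succAboveCases i ?_ ?_ j
  · simp
  · intro k
    simp [Fin.succAbove_ne, Pi.single_eq_of_ne (Fin.succAbove_ne i k)]

/-- Integration by parts on the torus: the integral over the unit cube of a divergence of a
smooth `ℤ³`-periodic family vanishes. -/
lemma integral_div_zero (Hf : Fin 3 → Vsp → ℝ)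
    (hsm : ∀ i, ContDiffOn ℝ ∞ (Hf i) Upos) (hper : ∀ i, PerU (Hf i)) (hs : 0 < s) :
    ∫ x in cube, ∑ i : Fin 3, Dx i (Hf i) (s, x) = 0 := by
  have hle : (0 : Fin 3 → ℝ) ≤ 1 := fun i => by norm_num
  have key := MeasureTheory.integral_divergence_of_hasFDerivAt_off_countable'
    (a := (0 : Fin 3 → ℝ)) (b := (1 : Fin 3 → ℝ)) hle
    (f := fun i y => Hf i (s, y))
    (f' := fun i y => (fderiv ℝ (Hf i) (s, y)).comp (ContinuousLinearMap.inr ℝ ℝ (Fin 3 → ℝ)))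
    (s := (∅ : Set (Fin 3 → ℝ))) Set.countable_empty
    (fun i => (slice_cont (hsm i) hs).continuousOn)
    (fun y _ i => hasFDerivAt_slice_space ((hsm i).diffAt' hs))
    ?_
  · have hfront : ∀ i : Fin 3, ∀ y : Fin 2 → ℝ,
        Hf i (s, i.insertNth (1 : ℝ) y) = Hf i (s, i.insertNth (0 : ℝ) y) := by
      intro i y
      rw [insertNth_one_eq]
      exact hper i (s, i.insertNth (0 : ℝ) y) hs (Pi.single i 1)
    have : ∑ i : Fin 3,
        ((∫ y in Set.Icc ((0 : Fin 3 → ℝ) ∘ i.succAbove) ((1 : Fin 3 → ℝ) ∘ i.succAbove),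
          Hf i (s, i.insertNth ((1 : Fin 3 → ℝ) i) y))
        - ∫ y in Set.Icc ((0 : Fin 3 → ℝ) ∘ i.succAbove) ((1 : Fin 3 → ℝ) ∘ i.succAbove),
          Hf i (s, i.insertNth ((0 : Fin 3 → ℝ) i) y)) = 0 := by
      refine Finset.sum_eq_zero fun i _ => sub_eq_zero.2 ?_
      refine setIntegral_congr_fun measurableSet_Icc fun y _ => ?_
      simp only [Pi.one_apply, Pi.zero_apply]
      exact hfront i y
    rw [cube]
    calc ∫ x in Set.Icc (0 : Fin 3 → ℝ) 1, ∑ i : Fin 3, Dx i (Hf i) (s, x)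
        = ∫ x in Set.Icc (0 : Fin 3 → ℝ) 1, ∑ i : Fin 3,
            ((fderiv ℝ (Hf i) (s, x)).comp (ContinuousLinearMap.inr ℝ ℝ (Fin 3 → ℝ)))
              (Pi.single i 1) := by rfl
      _ = _ := by rw [key, this]
  · apply ContinuousOn.integrableOn_compact isCompact_Icc
    have : ∀ i : Fin 3, Continuous (fun y => Dx i (Hf i) (s, y)) :=
      fun i => slice_cont ((hsm i).dd' _) hs
    exact (continuous_finset_sum _ fun i _ => this i).continuousOn

end divergence

section energy
variable {G : Vsp → ℝ}

/-- The abstract renormalized energy. -/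
def EnInt (pe qe : ℝ) (G : Vsp → ℝ) (s : ℝ) : ℝ :=
  ∫ x in cube, (1 / 2) * (s ^ pe * (Dt G (s, x)) ^ 2
    + s ^ qe * ∑ i : Fin 3, (Dx i G (s, x)) ^ 2)

lemma cube_compact : IsCompact cube := isCompact_Icc

lemma integrand_cont (pe qe : ℝ) (hG : ContDiffOn ℝ ∞ G Upos) {s : ℝ} (hs : 0 < s) :
    Continuous (fun x => (1 / 2 : ℝ) * (s ^ pe * (Dt G (s, x)) ^ 2
      + s ^ qe * ∑ i : Fin 3, (Dx i G (s, x)) ^ 2)) := by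
  have h1 : Continuous (fun x => Dt G (s, x)) := slice_cont (hG.dd' _) hs
  have h2 : ∀ i : Fin 3, Continuous (fun x => Dx i G (s, x)) :=
    fun i => slice_cont (hG.dd' _) hs
  exact continuous_const.mul (((continuous_const.mul ((h1.pow 2))).add
    (continuous_const.mul (continuous_finset_sum _ fun i _ => (h2 i).pow 2))))

lemma sumsq_cont (hG : ContDiffOn ℝ ∞ G Upos) {s : ℝ} (hs : 0 < s) :
    Continuous (fun x => ∑ i : Fin 3, (Dx i G (s, x)) ^ 2) :=
  continuous_finset_sum _ fun i _ => (slice_cont (hG.dd' _) hs).pow 2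

lemma energy_hasDeriv (pe qe b ce : ℝ) (hpb : pe = 2 * b) (hq : qe = pe - ce)
    (hG : ContDiffOn ℝ ∞ G Upos) (hPer : PerU G) (hW : WaveU b ce G)
    {s : ℝ} (hs : 0 < s) :
    HasDerivAt (EnInt pe qe G)
      (qe / 2 * s ^ (qe - 1) * ∫ x in cube, ∑ i : Fin 3, (Dx i G (s, x)) ^ 2) s := by
  -- notation
  set J : ℝ → (Fin 3 → ℝ) → ℝ := fun θ x =>
    (1 / 2) * ((pe * θ ^ (pe - 1) * (Dt G (θ, x)) ^ 2
        + θ ^ pe * (2 * Dt G (θ, x) * Dt (Dt G) (θ, x)))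
      + (qe * θ ^ (qe - 1) * ∑ i : Fin 3, (Dx i G (θ, x)) ^ 2
        + θ ^ qe * ∑ i : Fin 3, 2 * Dx i G (θ, x) * Dt (Dx i G) (θ, x))) with hJ
  -- pointwise derivative
  have step1 : ∀ θ : ℝ, 0 < θ → ∀ x : Fin 3 → ℝ,
      HasDerivAt (fun θ' => (1 / 2 : ℝ) * (θ' ^ pe * (Dt G (θ', x)) ^ 2
        + θ' ^ qe * ∑ i : Fin 3, (Dx i G (θ', x)) ^ 2)) (J θ x) θ := by
    intro θ hθ x
    have hmem : ((θ, x) : Vsp) ∈ Upos := hθ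
    have hu : HasDerivAt (fun θ' => Dt G (θ', x)) (Dt (Dt G) (θ, x)) θ :=
      hasDerivAt_slice_t ((hG.dd' _).diffAt' hmem)
    have hu2 : HasDerivAt (fun θ' => (Dt G (θ', x)) ^ 2)
        (2 * Dt G (θ, x) * Dt (Dt G) (θ, x)) θ := by
      simpa using hu.fun_pow 2
    have hp1 : HasDerivAt (fun θ' : ℝ => θ' ^ pe) (pe * θ ^ (pe - 1)) θ :=
      Real.hasDerivAt_rpow_const (Or.inl (ne_of_gt hθ))
    have hq1 : HasDerivAt (fun θ' : ℝ => θ' ^ qe) (qe * θ ^ (qe - 1)) θ :=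
      Real.hasDerivAt_rpow_const (Or.inl (ne_of_gt hθ))
    have hv2 : ∀ i : Fin 3, HasDerivAt (fun θ' => (Dx i G (θ', x)) ^ 2)
        (2 * Dx i G (θ, x) * Dt (Dx i G) (θ, x)) θ := by
      intro i
      have hv : HasDerivAt (fun θ' => Dx i G (θ', x)) (Dt (Dx i G) (θ, x)) θ :=
        hasDerivAt_slice_t ((hG.dd' _).diffAt' hmem)
      simpa using hv.fun_pow 2
    have hsum : HasDerivAt (fun θ' => ∑ i : Fin 3, (Dx i G (θ', x)) ^ 2)
        (∑ i : Fin 3, 2 * Dx i G (θ, x) * Dt (Dx i G) (θ, x)) θ :=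
      HasDerivAt.fun_sum (fun i _ => hv2 i)
    exact ((hp1.mul hu2).add (hq1.mul hsum)).const_mul (1 / 2)
  -- continuity of J jointly
  have hJc : ContinuousOn (fun pr : Vsp => J pr.1 pr.2) Upos := by
    have cu : ContinuousOn (fun pr : Vsp => Dt G pr) Upos := (hG.dd' _).continuousOn
    have cw : ContinuousOn (fun pr : Vsp => Dt (Dt G) pr) Upos :=
      ((hG.dd' _).dd' _).continuousOn
    have cv : ∀ i : Fin 3, ContinuousOn (fun pr : Vsp => Dx i G pr) Upos :=
      fun i => (hG.dd' _).continuousOn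
    have cvt : ∀ i : Fin 3, ContinuousOn (fun pr : Vsp => Dt (Dx i G) pr) Upos :=
      fun i => ((hG.dd' _).dd' _).continuousOn
    have cp1 : ContinuousOn (fun pr : Vsp => pr.1 ^ (pe - 1)) Upos :=
      (contDiffOn_tpow _).continuousOn
    have cp2 : ContinuousOn (fun pr : Vsp => pr.1 ^ pe) Upos :=
      (contDiffOn_tpow _).continuousOn
    have cq1 : ContinuousOn (fun pr : Vsp => pr.1 ^ (qe - 1)) Upos :=
      (contDiffOn_tpow _).continuousOn
    have cq2 : ContinuousOn (fun pr : Vsp => pr.1 ^ qe) Upos :=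
      (contDiffOn_tpow _).continuousOn
    refine continuousOn_const.mul (ContinuousOn.add (ContinuousOn.add ?_ ?_)
      (ContinuousOn.add ?_ ?_))
    · exact (continuousOn_const.mul cp1).mul (cu.pow 2)
    · exact cp2.mul ((continuousOn_const.mul cu).mul cw)
    · exact (continuousOn_const.mul cq1).mul
        (continuousOn_finset_sum _ fun i _ => (cv i).pow 2)
    · exact cq2.mul (continuousOn_finset_sum _ fun i _ =>
        (continuousOn_const.mul (cv i)).mul (cvt i))
  -- compact bound
  obtain ⟨C, hC⟩ : ∃ C, ∀ pr ∈ (Set.Icc (s / 2) (s + s / 2) ×ˢ cube : Set Vsp),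
      ‖J pr.1 pr.2‖ ≤ C := by
    have hK : IsCompact (Set.Icc (s / 2) (s + s / 2) ×ˢ cube : Set Vsp) :=
      isCompact_Icc.prod cube_compact
    have hsub : (Set.Icc (s / 2) (s + s / 2) ×ˢ cube : Set Vsp) ⊆ Upos := by
      rintro ⟨θ, x⟩ ⟨hθ, _⟩
      exact lt_of_lt_of_le (half_pos hs) hθ.1
    exact hK.exists_bound_of_continuousOn (hJc.mono hsub)
  -- dominated convergence
  have main := hasDerivAt_integral_of_dominated_loc_of_deriv_le
    (μ := volume.restrict cube) (x₀ := s)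
    (F := fun θ x => (1 / 2 : ℝ) * (θ ^ pe * (Dt G (θ, x)) ^ 2
      + θ ^ qe * ∑ i : Fin 3, (Dx i G (θ, x)) ^ 2))
    (F' := J) (bound := fun _ => C) (Metric.ball_mem_nhds s (half_pos hs))
    ?_ ?_ ?_ ?_ ?_ ?_
  · have hpoint : ∀ x : Fin 3 → ℝ, J s x
        = qe / 2 * s ^ (qe - 1) * (∑ i : Fin 3, (Dx i G (s, x)) ^ 2)
          + s ^ qe * ∑ i : Fin 3, Dx i (fun q => Dt G q * Dx i G q) (s, x) := by
      intro x
      have hmem : ((s, x) : Vsp) ∈ Upos := hs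
      have hw' : Dt (Dt G) (s, x) = -(b * s⁻¹ * Dt G (s, x))
          + s ^ (-ce) * ∑ i : Fin 3, Dx i (Dx i G) (s, x) := by
        have h0 := hW (s, x) hmem
        linarith [h0]
      have hvt : ∀ i : Fin 3, Dt (Dx i G) (s, x) = Dx i (Dt G) (s, x) :=
        fun i => dd_symm hG hmem _ _
      have hHf : ∀ i : Fin 3, Dx i (fun q => Dt G q * Dx i G q) (s, x)
          = Dx i (Dt G) (s, x) * Dx i G (s, x) + Dt G (s, x) * Dx i (Dx i G) (s, x) :=
        fun i => DD_mul ((hG.dd' _).diffAt' hmem) ((hG.dd' _).diffAt' hmem) _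
      have hsplit : ∑ i : Fin 3, Dx i (fun q => Dt G q * Dx i G q) (s, x)
          = (∑ i : Fin 3, Dx i (Dt G) (s, x) * Dx i G (s, x))
            + Dt G (s, x) * ∑ i : Fin 3, Dx i (Dx i G) (s, x) := by
        rw [Finset.mul_sum, ← Finset.sum_add_distrib]
        exact Finset.sum_congr rfl fun i _ => hHf i
      have hsum2 : ∑ i : Fin 3, 2 * Dx i G (s, x) * Dt (Dx i G) (s, x)
          = 2 * ∑ i : Fin 3, Dx i (Dt G) (s, x) * Dx i G (s, x) := by
        rw [Finset.mul_sum]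
        exact Finset.sum_congr rfl fun i _ => by rw [hvt i]; ring
      have e1 : s ^ (pe - 1) = s ^ pe / s := by rw [Real.rpow_sub hs, Real.rpow_one]
      have e3 : s ^ (qe - 1) = s ^ qe / s := by rw [Real.rpow_sub hs, Real.rpow_one]
      have e2 : s ^ qe = s ^ pe * s ^ (-ce) := by
        rw [hq, show pe - ce = pe + (-ce) from by ring, Real.rpow_add hs]
      simp only [hJ]
      rw [hsplit, hsum2, hw', e3, e2, e1, hpb]
      have hsne : s ≠ 0 := ne_of_gt hs
      field_simp
      ring
    have int1 : IntegrableOn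
        (fun x => qe / 2 * s ^ (qe - 1) * (∑ i : Fin 3, (Dx i G (s, x)) ^ 2)) cube :=
      ((continuous_const.mul (sumsq_cont hG hs)).continuousOn).integrableOn_compact
        cube_compact
    have int2 : IntegrableOn
        (fun x => s ^ qe * ∑ i : Fin 3, Dx i (fun q => Dt G q * Dx i G q) (s, x)) cube := by
      apply ContinuousOn.integrableOn_compact cube_compact
      exact (continuous_const.mul (continuous_finset_sum _ fun i _ =>
        slice_cont (((hG.dd' _).mul (hG.dd' _)).dd' _) hs)).continuousOn
    have hzero : ∫ x in cube,
        ∑ i : Fin 3, Dx i (fun q => Dt G q * Dx i G q) (s, x) = 0 := by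
      apply integral_div_zero (fun i => fun q => Dt G q * Dx i G q)
        (fun i => (hG.dd' _).mul (hG.dd' _))
        (fun i => ((hPer.dd hG _)).mul ((hPer.dd hG _))) hs
    have hstep3 : ∫ x in cube, J s x
        = qe / 2 * s ^ (qe - 1) * ∫ x in cube, ∑ i : Fin 3, (Dx i G (s, x)) ^ 2 := by
      calc ∫ x in cube, J s x
          = ∫ x in cube, (qe / 2 * s ^ (qe - 1) * (∑ i : Fin 3, (Dx i G (s, x)) ^ 2)
            + s ^ qe * ∑ i : Fin 3, Dx i (fun q => Dt G q * Dx i G q) (s, x)) := by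
            refine setIntegral_congr_fun (by rw [cube]; exact measurableSet_Icc)
              fun x _ => hpoint x
        _ = (∫ x in cube, qe / 2 * s ^ (qe - 1) * (∑ i : Fin 3, (Dx i G (s, x)) ^ 2))
            + ∫ x in cube, s ^ qe * ∑ i : Fin 3,
                Dx i (fun q => Dt G q * Dx i G q) (s, x) := integral_add int1 int2
        _ = qe / 2 * s ^ (qe - 1) * (∫ x in cube, ∑ i : Fin 3, (Dx i G (s, x)) ^ 2)
            + s ^ qe * ∫ x in cube, ∑ i : Fin 3,
                Dx i (fun q => Dt G q * Dx i G q) (s, x) := by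
            rw [integral_const_mul, integral_const_mul]
        _ = _ := by rw [hzero]; ring
    have h := main.2
    rw [hstep3] at h
    exact h
  · filter_upwards [eventually_gt_nhds hs] with θ hθ
    exact (integrand_cont pe qe hG hθ).aestronglyMeasurable
  · exact ((integrand_cont pe qe hG hs).continuousOn.integrableOn_compact cube_compact)
  · have hmk : Continuous (fun x : Fin 3 → ℝ => ((s : ℝ), x)) := Continuous.prodMk_right s
    have h2 : ContinuousOn (fun x : Fin 3 → ℝ => J s x) Set.univ :=
      ContinuousOn.comp (f := fun x : Fin 3 → ℝ => ((s : ℝ), x)) (t := Upos) hJc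
        hmk.continuousOn (fun x _ => hs)
    exact (continuousOn_univ.1 h2).aestronglyMeasurable
  · filter_upwards [ae_restrict_mem measurableSet_Icc] with x hx θ hθ
    have hθmem : θ ∈ Set.Icc (s / 2) (s + s / 2) := by
      rw [Metric.mem_ball, Real.dist_eq, abs_sub_lt_iff] at hθ
      constructor <;> linarith [hθ.1, hθ.2]
    exact hC (θ, x) ⟨hθmem, hx⟩
  · exact (integrableOn_const cube_compact.measure_lt_top.ne)
  · filter_upwards [ae_restrict_mem measurableSet_Icc] with x hx θ hθ
    have hθpos : 0 < θ := by
      rw [Metric.mem_ball, Real.dist_eq, abs_sub_lt_iff] at hθ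
      linarith [hθ.2]
    exact step1 θ hθpos x

end energy

lemma energy_mono (pe qe b ce : ℝ) (hpb : pe = 2 * b) (hq : qe = pe - ce) (hqnn : 0 ≤ qe)
    (hG : ContDiffOn ℝ ∞ G Upos) (hPer : PerU G) (hW : WaveU b ce G)
    {t t₀ : ℝ} (ht : 0 < t) (htt : t ≤ t₀) :
    EnInt pe qe G t ≤ EnInt pe qe G t₀ := by
  have hder : ∀ s : ℝ, 0 < s → HasDerivAt (EnInt pe qe G)
      (qe / 2 * s ^ (qe - 1) * ∫ x in cube, ∑ i : Fin 3, (Dx i G (s, x)) ^ 2) s :=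
    fun s hs => energy_hasDeriv pe qe b ce hpb hq hG hPer hW hs
  have hmono : MonotoneOn (EnInt pe qe G) (Set.Icc t t₀) := by
    apply monotoneOn_of_deriv_nonneg (convex_Icc t t₀)
    · intro s hs
      exact ((hder s (lt_of_lt_of_le ht hs.1)).continuousAt).continuousWithinAt
    · intro s hs
      rw [interior_Icc] at hs
      exact ((hder s (lt_trans ht hs.1)).differentiableAt).differentiableWithinAt
    · intro s hs
      rw [interior_Icc] at hs
      have hs0 : 0 < s := lt_trans ht hs.1
      rw [(hder s hs0).deriv]
      have h1 : (0 : ℝ) ≤ qe / 2 := by linarith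
      have h2 : (0 : ℝ) ≤ s ^ (qe - 1) := Real.rpow_nonneg hs0.le _
      have h3 : (0 : ℝ) ≤ ∫ x in cube, ∑ i : Fin 3, (Dx i G (s, x)) ^ 2 :=
        integral_nonneg fun x => Finset.sum_nonneg fun i _ => sq_nonneg _
      positivity
  exact hmono (Set.left_mem_Icc.2 htt) (Set.right_mem_Icc.2 htt) htt






/-- **Proposition 2, stiffest region (FLRW, `4/3 ≤ γ < 2`).** Renormalized energy
monotonicity `F_α(t) ≤ F_α(t₀)` for `φ = t^{2/γ−1} ψ`. -/
theorem flrw_renormalized_energy_stiff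
    (γ t₀ : ℝ) (hγ1 : 2 / 3 < γ) (hγ2 : γ < 2) (hγ3 : 4 / 3 ≤ γ) (ht₀ : 0 < t₀)
    (ψ : ℝ → (Fin 3 → ℝ) → ℝ)
    (hsmooth : SmoothOnPos ψ)
    (hper : ∀ t : ℝ, 0 < t → ZPeriodic (ψ t))
    (hwave : FLRWwave γ ψ) :
    ∀ α : Fin 3 → ℕ, ∀ t ∈ Set.Ioc (0 : ℝ) t₀,
      Fren γ (fun s x => s ^ (2 / γ - 1) * ψ s x) α t
        ≤ Fren γ (fun s x => s ^ (2 / γ - 1) * ψ s x) α t₀ := by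
  intro α t htIoc
  obtain ⟨ht, htt₀⟩ := htIoc
  have hγ0 : (0 : ℝ) < γ := lt_trans (by norm_num) hγ1
  set Ψ : Vsp → ℝ := fun p => ψ p.1 p.2 with hΨdef
  have hΨ : ContDiffOn ℝ ∞ Ψ Upos := hsmooth
  -- the wave equation in directional-derivative form
  have hwDD : ∀ p ∈ Upos, Dt (Dt Ψ) p + (2 / γ) * p.1⁻¹ * Dt Ψ p
      - p.1 ^ (-(4 / (3 * γ))) * ∑ i : Fin 3, Dx i (Dx i Ψ) p = 0 := by
    rintro ⟨t', x⟩ hp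
    have ht' : (0 : ℝ) < t' := hp
    have c1 : ∀ s : ℝ, 0 < s → ∀ y, dtd ψ s y = Dt Ψ (s, y) :=
      fun s hs0 y => deriv_slice (hΨ.diffAt' hs0)
    have c2 : dtd (dtd ψ) t' x = Dt (Dt Ψ) (t', x) := by
      have he : (fun s => dtd ψ s x) =ᶠ[nhds t'] (fun s => Dt Ψ (s, x)) := by
        filter_upwards [eventually_gt_nhds ht'] with s hs0
        exact c1 s hs0 x
      calc dtd (dtd ψ) t' x = deriv (fun s => Dt Ψ (s, x)) t' := he.deriv_eq
        _ = Dt (Dt Ψ) (t', x) := deriv_slice ((hΨ.dd' _).diffAt' hp)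
    have c3 : ∀ i : Fin 3, pd i (pd i (ψ t')) x = Dx i (Dx i Ψ) (t', x) := by
      intro i
      have inner : pd i (ψ t') = fun y => Dx i Ψ (t', y) :=
        funext fun y => pd_slice (hΨ.diffAt' (by exact ht' : ((t', y) : Vsp) ∈ Upos)) i
      rw [inner]
      exact pd_slice ((hΨ.dd' _).diffAt' hp) i
    have h0 := hwave t' ht' x
    rw [c2, c1 t' ht' x, Finset.sum_congr rfl (fun i _ => c3 i)] at h0
    exact h0
  -- the renormalized function
  set F : Vsp → ℝ := fun p => p.1 ^ (2 / γ - 1) * Ψ p with hFdef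
  have hFsm : ContDiffOn ℝ ∞ F Upos := (contDiffOn_tpow _).mul hΨ
  have hFW : WaveU (2 - 2 / γ) (4 / (3 * γ)) F := waveU_renorm γ hγ0 hΨ hwDD
  have hFper : PerU F := by
    intro p hp k
    show p.1 ^ (2 / γ - 1) * Ψ (p.1, p.2 + fun i => (k i : ℝ)) = p.1 ^ (2 / γ - 1) * Ψ p
    have : Ψ (p.1, p.2 + fun i => (k i : ℝ)) = Ψ p := hper p.1 hp p.2 k
    rw [this]
  set G : Vsp → ℝ := Ax α F with hGdef
  have hGsm : ContDiffOn ℝ ∞ G Upos := contDiffOn_Ax hFsm α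
  have hGper : PerU G := perU_Ax hFsm hFper α
  have hGW : WaveU (2 - 2 / γ) (4 / (3 * γ)) G := hFW.ax hFsm α
  -- identify `Fren` with `EnInt`
  have hFren : ∀ s : ℝ, 0 < s →
      Fren γ (fun s x => s ^ (2 / γ - 1) * ψ s x) α s
        = EnInt (4 - 4 / γ) (4 - 4 / γ - 4 / (3 * γ)) G s := by
    intro s hs0
    rw [Fren, EnInt, ← integral_const_mul]
    refine setIntegral_congr_fun (by rw [cube]; exact measurableSet_Icc) fun x _ => ?_
    have hslice : ∀ σ : ℝ, 0 < σ →
        pdMulti α ((fun s x => s ^ (2 / γ - 1) * ψ s x) σ) = fun y => G (σ, y) :=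
      fun σ hσ => pdMulti_slice hFsm α hσ
    have hdtd : dtd (fun s' => pdMulti α ((fun s x => s ^ (2 / γ - 1) * ψ s x) s')) s x
        = Dt G (s, x) := by
      have he : (fun s' => pdMulti α ((fun s x => s ^ (2 / γ - 1) * ψ s x) s') x)
          =ᶠ[nhds s] (fun s' => G (s', x)) := by
        filter_upwards [eventually_gt_nhds hs0] with σ hσ
        exact congrFun (hslice σ hσ) x
      calc dtd (fun s' => pdMulti α ((fun s x => s ^ (2 / γ - 1) * ψ s x) s')) s x
          = deriv (fun s' => G (s', x)) s := he.deriv_eq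
        _ = Dt G (s, x) := deriv_slice (hGsm.diffAt' hs0)
    have hpd : ∀ i : Fin 3,
        pd i (pdMulti α (fun y => s ^ (2 / γ - 1) * ψ s y)) x = Dx i G (s, x) := by
      intro i
      have h1 : pdMulti α (fun y => s ^ (2 / γ - 1) * ψ s y) = fun y => G (s, y) :=
        hslice s hs0
      rw [h1]
      exact pd_slice (hGsm.diffAt' hs0) i
    have hsum : (∑ i : Fin 3, pd i (pdMulti α (fun y => s ^ (2 / γ - 1) * ψ s y)) x ^ 2)
        = ∑ i : Fin 3, Dx i G (s, x) ^ 2 :=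
      Finset.sum_congr rfl (fun i _ => by rw [hpd i])
    rw [hdtd, hsum]
  rw [hFren t ht, hFren t₀ ht₀]
  have hqnn : (0 : ℝ) ≤ 4 - 4 / γ - 4 / (3 * γ) := by
    have h1 : 4 / γ ≤ 3 := by
      rw [div_le_iff₀ hγ0]; linarith
    have h2 : 4 / (3 * γ) ≤ 1 := by
      rw [div_le_one (by linarith)]; linarith
    linarith
  exact energy_mono (4 - 4 / γ) (4 - 4 / γ - 4 / (3 * γ)) (2 - 2 / γ) (4 / (3 * γ))
    (by ring) (by ring) hqnn hGsm hGper hGW ht htt₀
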